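/- Let d ≥ 1 and let c : (Fin d → ℕ) → ℂ be such that for every z ∈ ℂ^d the family (c_k · Π_j z_j^{k_j})_{k ∈ ℕ^d} is summable, with sum f(z), and let M_f(r) := sup { |f(z)| : |z_j| = r_j for all j } for r ∈ (0,∞)^d. Let Q : (Fin d → ℕ) → ℝ satisfy |c_k| ≤ exp(−Q(k)) for all k ∈ ℕ^d, and suppose there exists ε₀ ∈ (0,1) with K(ε₀) := Σ_{k ∈ ℕ^d} exp(−ε₀·Q(k)) < ∞. Then for every r with r_j ≥ 1 for all j and Q^∗((log r₁, …, log r_d)/(1−ε₀)) < ∞, where Q^∗(u) := sup_{k ∈ ℕ^d} (⟨k, u⟩ − Q(k)), one has M_f(r) ≤ K(ε₀) · exp((1−ε₀) · Q^∗((log r₁, …, log r_d)/(1−ε₀))). -/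

import Mathlib

/-- Proposition 4.3 (multivariate lower estimate): let `f : ℂ^d → ℂ` be given by an
everywhere summable multi-power series with coefficients `c_k` satisfying
`|c_k| ≤ exp(-Q(k))` for all `k ∈ ℕ^d`, and suppose
`K(ε₀) = Σ_{k ∈ ℕ^d} exp(-ε₀·Q(k)) < ∞` for some `ε₀ ∈ (0,1)`. Then for every `r`
with `r_j ≥ 1` for all `j` such that the discrete multivariate conjugate
`Q*((log r)/(1-ε₀)) = sup_{k} (⟨k, (log r)/(1-ε₀)⟩ - Q(k))` is finite,
`M_f(r) ≤ K(ε₀) · exp((1-ε₀)·Q*((log r)/(1-ε₀)))`. -/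
theorem multivariate_maximal_function_upper_estimate
    (d : ℕ) (hd : 1 ≤ d)
    (c : (Fin d → ℕ) → ℂ) (f : (Fin d → ℂ) → ℂ)
    (hf : ∀ z : Fin d → ℂ,
      HasSum (fun k : Fin d → ℕ => c k * ∏ j : Fin d, z j ^ k j) (f z))
    (Q : (Fin d → ℕ) → ℝ)
    (hc : ∀ k : Fin d → ℕ, ‖c k‖ ≤ Real.exp (-Q k))
    (ε₀ : ℝ) (hε₀ : ε₀ ∈ Set.Ioo (0 : ℝ) 1)
    (hK : Summable fun k : Fin d → ℕ => Real.exp (-ε₀ * Q k)) :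
    ∀ r : Fin d → ℝ, (∀ j, 1 ≤ r j) →
      BddAbove (Set.range
        fun k : Fin d → ℕ => (∑ j : Fin d, (k j : ℝ) * (Real.log (r j) / (1 - ε₀))) - Q k) →
      sSup {x : ℝ | ∃ z : Fin d → ℂ,
          (∀ j, ‖z j‖ = r j) ∧ x = ‖f z‖}
        ≤ (∑' k : Fin d → ℕ, Real.exp (-ε₀ * Q k)) *
          Real.exp ((1 - ε₀) *
            sSup (Set.range
              fun k : Fin d → ℕ =>
                (∑ j : Fin d, (k j : ℝ) * (Real.log (r j) / (1 - ε₀))) - Q k)) := by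
  obtain ⟨hε0, hε1⟩ := hε₀
  intro r hr hB
  set S := sSup (Set.range fun k : Fin d → ℕ =>
    (∑ j : Fin d, (k j : ℝ) * (Real.log (r j) / (1 - ε₀))) - Q k) with hSdef
  have h1ε : (0:ℝ) < 1 - ε₀ := by linarith
  have hrpos : ∀ j, (0:ℝ) < r j := fun j => lt_of_lt_of_le one_pos (hr j)
  have key : ∀ k : Fin d → ℕ, Real.exp (-Q k) * ∏ j, r j ^ k j ≤
      Real.exp (-ε₀ * Q k) * Real.exp ((1 - ε₀) * S) := by
    intro k
    have hprod : ∏ j, r j ^ k j = Real.exp (∑ j, (k j : ℝ) * Real.log (r j)) := by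
      rw [Real.exp_sum]
      refine Finset.prod_congr rfl fun j _ => ?_
      rw [← Real.exp_log (hrpos j), ← Real.exp_nat_mul, Real.exp_log (hrpos j)]
    have hmul : (1 - ε₀) * (∑ j, (k j : ℝ) * (Real.log (r j) / (1 - ε₀))) =
        ∑ j, (k j : ℝ) * Real.log (r j) := by
      rw [Finset.mul_sum]
      refine Finset.sum_congr rfl fun j _ => ?_
      field_simp
    have heq : Real.exp (-Q k) * ∏ j, r j ^ k j =
        Real.exp (-ε₀ * Q k) *
          Real.exp ((1 - ε₀) * ((∑ j, (k j : ℝ) * (Real.log (r j) / (1 - ε₀))) - Q k)) := by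
      rw [hprod, ← Real.exp_add, ← Real.exp_add, mul_sub, hmul]
      ring_nf
    rw [heq]
    refine mul_le_mul_of_nonneg_left (Real.exp_le_exp.mpr ?_) (Real.exp_pos _).le
    exact mul_le_mul_of_nonneg_left (le_csSup hB ⟨k, rfl⟩) h1ε.le
  have hbound : ∀ (z : Fin d → ℂ), (∀ j, ‖z j‖ = r j) →
      ∀ k : Fin d → ℕ, ‖c k * ∏ j, z j ^ k j‖ ≤
        Real.exp (-ε₀ * Q k) * Real.exp ((1 - ε₀) * S) := by
    intro z hz k
    have habs : ‖c k * ∏ j, z j ^ k j‖ = ‖c k‖ * ∏ j, r j ^ k j := by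
      rw [norm_mul, norm_prod]
      congr 1
      exact Finset.prod_congr rfl fun j _ => by rw [norm_pow, hz j]
    rw [habs]
    refine le_trans (mul_le_mul_of_nonneg_right (hc k) ?_) (key k)
    exact Finset.prod_nonneg fun j _ => pow_nonneg (hrpos j).le _
  refine Real.sSup_le ?_ ?_
  · rintro x ⟨z, hz, rfl⟩
    have hsumB : Summable fun k : Fin d → ℕ =>
        Real.exp (-ε₀ * Q k) * Real.exp ((1 - ε₀) * S) := hK.mul_right _
    have hsum : Summable fun k : Fin d → ℕ => ‖c k * ∏ j, z j ^ k j‖ :=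
      Summable.of_nonneg_of_le (fun k => norm_nonneg _) (hbound z hz) hsumB
    calc ‖f z‖ = ‖∑' k : Fin d → ℕ, c k * ∏ j, z j ^ k j‖ := by
          rw [(hf z).tsum_eq]
      _ ≤ ∑' k : Fin d → ℕ, ‖c k * ∏ j, z j ^ k j‖ := norm_tsum_le_tsum_norm hsum
      _ ≤ ∑' k : Fin d → ℕ, Real.exp (-ε₀ * Q k) * Real.exp ((1 - ε₀) * S) :=
          Summable.tsum_le_tsum (hbound z hz) hsum hsumB
      _ = (∑' k : Fin d → ℕ, Real.exp (-ε₀ * Q k)) * Real.exp ((1 - ε₀) * S) :=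
          tsum_mul_right
  · exact mul_nonneg (tsum_nonneg fun _ => (Real.exp_pos _).le) (Real.exp_pos _).le
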